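/- Two-subspace lemma: Let N₁, N₂ be closed subspaces of a Hilbert space H with orthogonal projections P₁, P₂. Then P₁P₂ is compact if and only if N₁ + N₂ is closed and P_{N₁+N₂} - (P₁ + P₂) is compact. -/

import Mathlib

open ContinuousLinearMap Submodule Filter

noncomputable section

/-- The orthogonal projection onto (the topological closure of) a submodule `K` of a Hilbert
space, viewed as an operator on the whole space. -/
def projCLM {H : Type*} [NormedAddCommGroup H] [InnerProductSpace ℂ H] [CompleteSpace H]
    (K : Submodule ℂ H) : H →L[ℂ] H :=
  haveI : CompleteSpace K.topologicalClosure :=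
    K.isClosed_topologicalClosure.completeSpace_coe
  K.topologicalClosure.subtypeL ∘L orthogonalProjection K.topologicalClosure

namespace TwoSubspace

set_option linter.unusedSectionVars false
set_option linter.unusedTactic false
set_option linter.deprecated false

variable {H : Type*} [NormedAddCommGroup H] [InnerProductSpace ℂ H] [CompleteSpace H]
local notation "⟪" x ", " y "⟫" => @inner ℂ _ _ x y

lemma projCLM_apply_mem (K : Submodule ℂ H) (x : H) :
    projCLM K x ∈ K.topologicalClosure := by
  haveI : CompleteSpace K.topologicalClosure :=
    K.isClosed_topologicalClosure.completeSpace_coe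
  exact (orthogonalProjection K.topologicalClosure x).2

lemma projCLM_inner_sub (K : Submodule ℂ H) (x : H) :
    ∀ z ∈ K.topologicalClosure, ⟪x - projCLM K x, z⟫ = 0 := by
  haveI : CompleteSpace K.topologicalClosure :=
    K.isClosed_topologicalClosure.completeSpace_coe
  exact fun w hw => starProjection_inner_eq_zero (K := K.topologicalClosure) x w hw

lemma projCLM_eq (K : Submodule ℂ H) {x y : H} (hy : y ∈ K.topologicalClosure)
    (h : ∀ z ∈ K.topologicalClosure, ⟪x - y, z⟫ = 0) : projCLM K x = y := by
  haveI : CompleteSpace K.topologicalClosure :=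
    K.isClosed_topologicalClosure.completeSpace_coe
  exact eq_starProjection_of_mem_of_inner_eq_zero (K := K.topologicalClosure) hy h

variable {K : Submodule ℂ H}

lemma projCLM_apply_mem' (hK : IsClosed (K : Set H)) (x : H) : projCLM K x ∈ K := by
  have := projCLM_apply_mem K x; rwa [hK.submodule_topologicalClosure_eq] at this

lemma projCLM_inner_sub' (hK : IsClosed (K : Set H)) (x : H) :
    ∀ z ∈ K, ⟪x - projCLM K x, z⟫ = 0 := by
  have := projCLM_inner_sub K x; rwa [hK.submodule_topologicalClosure_eq] at this

lemma projCLM_eq' (hK : IsClosed (K : Set H)) {x y : H} (hy : y ∈ K)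
    (h : ∀ z ∈ K, ⟪x - y, z⟫ = 0) : projCLM K x = y := by
  rw [← hK.submodule_topologicalClosure_eq] at hy h; exact projCLM_eq K hy h

lemma projCLM_eq_self (K : Submodule ℂ H) {x : H} (hx : x ∈ K.topologicalClosure) :
    projCLM K x = x :=
  projCLM_eq K hx (by simp)

lemma projCLM_eq_self' (hK : IsClosed (K : Set H)) {x : H} (hx : x ∈ K) :
    projCLM K x = x :=
  projCLM_eq_self K (by rwa [hK.submodule_topologicalClosure_eq])

lemma inner_projCLM_self (K : Submodule ℂ H) (x : H) :
    ⟪projCLM K x, x⟫ = (‖projCLM K x‖ : ℂ) ^ 2 := by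
  have h := projCLM_inner_sub K x _ (projCLM_apply_mem K x)
  rw [inner_sub_left, sub_eq_zero] at h
  rw [← inner_conj_symm, h, inner_self_eq_norm_sq_to_K]
  simp

lemma norm_projCLM_apply_le (K : Submodule ℂ H) (x : H) : ‖projCLM K x‖ ≤ ‖x‖ := by
  have h := inner_projCLM_self K x
  have h2 : ‖projCLM K x‖ ^ 2 ≤ ‖projCLM K x‖ * ‖x‖ := by
    calc ‖projCLM K x‖ ^ 2 = ‖((‖projCLM K x‖ : ℂ) ^ 2)‖ := by
          rw [norm_pow]; simp
      _ = ‖⟪projCLM K x, x⟫‖ := by rw [h]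
      _ ≤ ‖projCLM K x‖ * ‖x‖ := by
          simpa using norm_inner_le_norm (𝕜 := ℂ) (projCLM K x) x
  rcases eq_or_lt_of_le (norm_nonneg (projCLM K x)) with h0 | h0
  · rw [← h0]; exact norm_nonneg x
  · nlinarith [h2]

lemma isSelfAdjoint_projCLM (K : Submodule ℂ H) : IsSelfAdjoint (projCLM K) := by
  haveI : CompleteSpace K.topologicalClosure :=
    K.isClosed_topologicalClosure.completeSpace_coe
  exact isSelfAdjoint_starProjection K.topologicalClosure

lemma inner_projCLM (K : Submodule ℂ H) (x y : H) :
    ⟪projCLM K x, y⟫ = ⟪x, projCLM K y⟫ := by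
  have := (isSelfAdjoint_projCLM K).isSymmetric x y
  simpa using this

lemma projCLM_idem (K : Submodule ℂ H) (x : H) :
    projCLM K (projCLM K x) = projCLM K x :=
  projCLM_eq_self K (projCLM_apply_mem K x)


/-- Schauder: the adjoint of a compact operator on a Hilbert space is compact. -/
lemma isCompactOperator_adjoint {A : H →L[ℂ] H} (hA : IsCompactOperator ⇑A) :
    IsCompactOperator ⇑(adjoint A) := by
  set A' := adjoint A with hA'
  set B := A ∘L A' with hBdef
  have hBc : IsCompactOperator ⇑B := by
    have := hA.comp_clm A'
    exact this
  have key : ∀ u v : H, ‖A' u - A' v‖ ^ 2 ≤ ‖B u - B v‖ * ‖u - v‖ := by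
    intro u v
    have h1 : A' u - A' v = A' (u - v) := (map_sub _ _ _).symm
    have h2 : B u - B v = B (u - v) := (map_sub _ _ _).symm
    rw [h1, h2]
    set w := u - v
    have h3 : (‖A' w‖ : ℝ) ^ 2 = RCLike.re ⟪A' w, A' w⟫ := (inner_self_eq_norm_sq _).symm
    have h4 : ⟪A' w, A' w⟫ = ⟪w, B w⟫ := by
      rw [hA', adjoint_inner_left]; rfl
    rw [h3, h4]
    calc RCLike.re ⟪w, B w⟫ ≤ ‖w‖ * ‖B w‖ := re_inner_le_norm _ _
      _ = ‖B w‖ * ‖w‖ := mul_comm _ _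
  have htb : TotallyBounded (⇑A' '' Metric.closedBall 0 1) := by
    rw [Metric.totallyBounded_iff]
    intro ε hε
    obtain ⟨K, hKc, hK⟩ := hBc.image_closedBall_subset_compact 1
    have h1 : TotallyBounded (⇑B '' Metric.closedBall 0 1) := hKc.totallyBounded.subset hK
    obtain ⟨t, hts, htf, hcov⟩ :=
      Metric.finite_approx_of_totallyBounded h1 (ε ^ 2 / 4) (by positivity)
    classical
    set g : H → H := fun y =>
      if h : y ∈ ⇑B '' Metric.closedBall (0 : H) 1 then A' h.choose else 0 with hg
    refine ⟨g '' t, htf.image g, ?_⟩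
    rintro w ⟨x, hx, rfl⟩
    have hBx : B x ∈ ⇑B '' Metric.closedBall (0 : H) 1 := Set.mem_image_of_mem _ hx
    obtain ⟨y, hyt, hy⟩ := Set.mem_iUnion₂.1 (hcov hBx)
    have hymem : y ∈ ⇑B '' Metric.closedBall (0 : H) 1 := hts hyt
    obtain ⟨hxy1, hxy2⟩ := hymem.choose_spec
    have hgy : g y = A' hymem.choose := by rw [hg]; simp only [dif_pos hymem]
    refine Set.mem_iUnion₂.2 ⟨g y, Set.mem_image_of_mem g hyt, ?_⟩
    rw [Metric.mem_ball, dist_eq_norm, hgy]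
    set xy := hymem.choose
    have hd : ‖B x - B xy‖ < ε ^ 2 / 4 := by
      rw [hxy2]
      rw [Metric.mem_ball, dist_eq_norm] at hy
      exact hy
    have hxxy : ‖x - xy‖ ≤ 2 := by
      have h5 : ‖x‖ ≤ 1 := by simpa using hx
      have h6 : ‖xy‖ ≤ 1 := by simpa using hxy1
      calc ‖x - xy‖ ≤ ‖x‖ + ‖xy‖ := norm_sub_le _ _
        _ ≤ 2 := by linarith
    have h7 := key x xy
    have h8 : ‖A' x - A' xy‖ ^ 2 < ε ^ 2 := by
      nlinarith [norm_nonneg (B x - B xy), norm_nonneg (x - xy), norm_nonneg (A' x - A' xy)]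
    exact lt_of_pow_lt_pow_left₀ 2 hε.le h8
  have hcomp : IsCompact (closure (⇑A' '' Metric.closedBall 0 1)) :=
    TotallyBounded.isCompact_of_isClosed htb.closure isClosed_closure
  exact ⟨_, hcomp, Filter.mem_of_superset (Metric.closedBall_mem_nhds 0 one_pos)
    fun x hx => subset_closure (Set.mem_image_of_mem _ hx)⟩


/-- A closed subspace on which a compact operator restricts to the identity is
finite-dimensional. -/
lemma finiteDimensional_of_isCompactOperator_fix {T : H →L[ℂ] H} (hT : IsCompactOperator ⇑T)
    {M : Submodule ℂ H} (hM : IsClosed (M : Set H)) (hfix : ∀ x ∈ M, T x = x) :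
    FiniteDimensional ℂ M := by
  obtain ⟨K, hK, hV⟩ := hT
  obtain ⟨r, hr, hball⟩ := Metric.mem_nhds_iff.1 hV
  have hsub : (↑M ∩ Metric.closedBall (0 : H) (r / 2)) ⊆ K := by
    rintro x ⟨hxM, hxB⟩
    have hx : x ∈ Metric.ball (0 : H) r := by
      rw [Metric.mem_closedBall] at hxB
      rw [Metric.mem_ball]
      linarith
    have := hball hx
    rwa [Set.mem_preimage, hfix x hxM] at this
  have hScpt : IsCompact (↑M ∩ Metric.closedBall (0 : H) (r / 2)) :=
    hK.of_isClosed_subset (hM.inter Metric.isClosed_closedBall) hsub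
  have hball' : IsCompact (Metric.closedBall (0 : (↥M)) (r / 2)) := by
    have hemb : Topology.IsClosedEmbedding ((↑) : M → H) := hM.isClosedEmbedding_subtypeVal
    have : Metric.closedBall (0 : (↥M)) (r / 2) =
        ((↑) : M → H) ⁻¹' (↑M ∩ Metric.closedBall (0 : H) (r / 2)) := by
      ext y
      simp [Metric.mem_closedBall, dist_eq_norm]
    rw [this]
    exact hemb.isCompact_preimage hScpt
  exact FiniteDimensional.of_isCompact_closedBall₀ ℂ (by positivity) hball'

/-- The projection onto a finite-dimensional subspace is compact. -/
lemma isCompactOperator_projCLM_of_fd (M : Submodule ℂ H) [FiniteDimensional ℂ M] :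
    IsCompactOperator ⇑(projCLM M) := by
  have hM : IsClosed (M : Set H) := M.closed_of_finiteDimensional
  haveI : ProperSpace (↥M) := FiniteDimensional.proper ℂ (↥M)
  have hcpt : IsCompact (((↑) : M → H) '' Metric.closedBall 0 1) :=
    (isCompact_closedBall _ _).image continuous_subtype_val
  refine ⟨_, hcpt, Filter.mem_of_superset (Metric.closedBall_mem_nhds 0 one_pos) ?_⟩
  intro x hx
  refine ⟨⟨projCLM M x, projCLM_apply_mem' hM x⟩, ?_, rfl⟩
  rw [Metric.mem_closedBall] at hx ⊢
  simp only [dist_zero_right] at hx ⊢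
  calc ‖(⟨projCLM M x, _⟩ : M)‖ = ‖projCLM M x‖ := rfl
    _ ≤ ‖x‖ := norm_projCLM_apply_le M x
    _ ≤ 1 := hx

/-- Sequential extraction from a compact operator. -/
lemma exists_subseq_tendsto {T : H →L[ℂ] H} (hT : IsCompactOperator ⇑T) (u : ℕ → H)
    (hu : ∀ n, ‖u n‖ ≤ 1) :
    ∃ φ : ℕ → ℕ, StrictMono φ ∧ ∃ z : H,
      Filter.Tendsto (fun n => T (u (φ n))) Filter.atTop (nhds z) := by
  obtain ⟨K, hKc, hK⟩ := hT.image_closedBall_subset_compact 1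
  have hmem : ∀ n, T (u n) ∈ K := fun n =>
    hK ⟨u n, by simpa [Metric.mem_closedBall, dist_eq_norm] using hu n, rfl⟩
  obtain ⟨z, _, φ, hφ, hconv⟩ := hKc.isSeqCompact hmem
  exact ⟨φ, hφ, z, hconv⟩

/-- Absorption: projections onto nested closed subspaces. -/
lemma projCLM_absorb_left {K L : Submodule ℂ H} (hL : IsClosed (L : Set H))
    (hKL : K ≤ L) (hK : IsClosed (K : Set H)) (x : H) :
    projCLM L (projCLM K x) = projCLM K x :=
  projCLM_eq_self' hL (hKL (projCLM_apply_mem' hK x))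

lemma projCLM_absorb_right {K L : Submodule ℂ H} (hL : IsClosed (L : Set H))
    (hKL : K ≤ L) (hK : IsClosed (K : Set H)) (x : H) :
    projCLM K (projCLM L x) = projCLM K x := by
  apply ext_inner_right ℂ
  intro y
  calc ⟪projCLM K (projCLM L x), y⟫ = ⟪projCLM L x, projCLM K y⟫ := inner_projCLM K _ y
    _ = ⟪x, projCLM L (projCLM K y)⟫ := inner_projCLM L x _
    _ = ⟪x, projCLM K y⟫ := by rw [projCLM_absorb_left hL hKL hK y]
    _ = ⟪projCLM K x, y⟫ := (inner_projCLM K x y).symm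

/-- Splitting a projection along a closed subspace of it. -/
lemma projCLM_split {M K : Submodule ℂ H} (hK : IsClosed (K : Set H))
    (hM : IsClosed (M : Set H)) (hMK : M ≤ K) (x : H) :
    projCLM K x = projCLM M x + projCLM (K ⊓ Mᗮ) x := by
  have hKM : IsClosed ((K ⊓ Mᗮ : Submodule ℂ H) : Set H) := by
    rw [Submodule.coe_inf]
    exact hK.inter M.isClosed_orthogonal
  apply projCLM_eq' hK
  · exact add_mem (hMK (projCLM_apply_mem' hM x))
      (Submodule.mem_inf.1 (projCLM_apply_mem' hKM x)).1
  · intro z hz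
    have hzdec : z - projCLM M z ∈ K ⊓ Mᗮ := by
      refine Submodule.mem_inf.2 ⟨sub_mem hz (hMK (projCLM_apply_mem' hM z)), ?_⟩
      rw [Submodule.mem_orthogonal]
      intro w hw
      rw [← inner_conj_symm, projCLM_inner_sub' hM z w hw]
      simp
    have hPM : projCLM (K ⊓ Mᗮ) x ∈ Mᗮ :=
      (Submodule.mem_inf.1 (projCLM_apply_mem' hKM x)).2
    have h1 : ⟪x - (projCLM M x + projCLM (K ⊓ Mᗮ) x), projCLM M z⟫ = 0 := by
      have e1 := projCLM_inner_sub' hM x (projCLM M z) (projCLM_apply_mem' hM z)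
      have e2 : ⟪projCLM (K ⊓ Mᗮ) x, projCLM M z⟫ = 0 := by
        rw [← inner_conj_symm,
          (Submodule.mem_orthogonal _ _).1 hPM (projCLM M z) (projCLM_apply_mem' hM z)]
        simp
      calc ⟪x - (projCLM M x + projCLM (K ⊓ Mᗮ) x), projCLM M z⟫
          = ⟪x - projCLM M x, projCLM M z⟫ - ⟪projCLM (K ⊓ Mᗮ) x, projCLM M z⟫ := by
            rw [← inner_sub_left]
            rw [sub_add_eq_sub_sub]
        _ = 0 := by rw [e1, e2, sub_zero]
    have h2 : ⟪x - (projCLM M x + projCLM (K ⊓ Mᗮ) x), z - projCLM M z⟫ = 0 := by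
      have e1 := projCLM_inner_sub' hKM x (z - projCLM M z) hzdec
      have e2 : ⟪projCLM M x, z - projCLM M z⟫ = 0 :=
        (Submodule.mem_orthogonal _ _).1 (Submodule.mem_inf.1 hzdec).2 (projCLM M x)
          (projCLM_apply_mem' hM x)
      calc ⟪x - (projCLM M x + projCLM (K ⊓ Mᗮ) x), z - projCLM M z⟫
          = ⟪x - projCLM (K ⊓ Mᗮ) x, z - projCLM M z⟫ - ⟪projCLM M x, z - projCLM M z⟫ := by
            rw [← inner_sub_left]
            rw [sub_add_eq_sub_sub, sub_right_comm]
        _ = 0 := by rw [e1, e2, sub_zero]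
    calc ⟪x - (projCLM M x + projCLM (K ⊓ Mᗮ) x), z⟫
        = ⟪x - (projCLM M x + projCLM (K ⊓ Mᗮ) x), projCLM M z⟫ +
          ⟪x - (projCLM M x + projCLM (K ⊓ Mᗮ) x), z - projCLM M z⟫ := by
          rw [← inner_add_right]; congr 1; abel
      _ = 0 := by rw [h1, h2, add_zero]


lemma opNorm_lt_one_of_compact {K₁ K₂ : Submodule ℂ H} (hK₁ : IsClosed (K₁ : Set H))
    (hK₂ : IsClosed (K₂ : Set H)) (hdisj : K₁ ⊓ K₂ = ⊥)
    (hcpt : IsCompactOperator ⇑(projCLM K₁ ∘L projCLM K₂)) :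
    ‖projCLM K₁ ∘L projCLM K₂‖ < 1 := by
  set B := projCLM K₁ ∘L projCLM K₂ with hBdef
  have hle : ‖B‖ ≤ 1 := by
    refine opNorm_le_bound _ zero_le_one fun x => ?_
    rw [one_mul]
    calc ‖B x‖ = ‖projCLM K₁ (projCLM K₂ x)‖ := rfl
      _ ≤ ‖projCLM K₂ x‖ := norm_projCLM_apply_le _ _
      _ ≤ ‖x‖ := norm_projCLM_apply_le _ _
  rcases lt_or_eq_of_le hle with h | hc
  · exact h
  exfalso
  have hexists : ∀ n : ℕ, ∃ x : H, ‖x‖ < 1 ∧ 1 - 1/(n+1 : ℝ) < ‖B x‖ := by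
    intro n
    have hlt : 1 - 1/(n+1 : ℝ) < ‖B‖ := by
      rw [hc]
      have : (0:ℝ) < 1/(n+1) := by positivity
      linarith
    exact exists_lt_apply_of_lt_opNorm B hlt
  choose x hx1 hx2 using hexists
  set y : ℕ → H := fun n => projCLM K₂ (x n) with hy
  have hy1 : ∀ n, ‖y n‖ ≤ 1 := fun n => le_trans (norm_projCLM_apply_le _ _) (hx1 n).le
  have hymem : ∀ n, y n ∈ K₂ := fun n => projCLM_apply_mem' hK₂ _
  have hyfix : ∀ n, projCLM K₂ (y n) = y n := fun n => projCLM_eq_self' hK₂ (hymem n)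
  have hq1y : ∀ n, projCLM K₁ (y n) = B (x n) := fun n => rfl
  have hq1lb : ∀ n : ℕ, 1 - 1/(n+1 : ℝ) < ‖projCLM K₁ (y n)‖ := by
    intro n; rw [hq1y n]; exact hx2 n
  have hq1ub : ∀ n, ‖projCLM K₁ (y n)‖ ≤ 1 := fun n =>
    le_trans (norm_projCLM_apply_le _ _) (hy1 n)
  set T := projCLM K₂ ∘L B with hT
  have hTc : IsCompactOperator ⇑T := by
    have := hcpt.clm_comp (projCLM K₂)
    exact this
  obtain ⟨φ, hφ, z, hz⟩ := exists_subseq_tendsto hTc y hy1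
  have hkey : ∀ n, ‖T (y n) - y n‖ ^ 2 ≤ 2 / (n+1 : ℝ) := by
    intro n
    have hTval : T (y n) = projCLM K₂ (projCLM K₁ (y n)) := by
      show projCLM K₂ (B (y n)) = _
      congr 1
      show projCLM K₁ (projCLM K₂ (y n)) = _
      rw [hyfix n]
    have h1 : RCLike.re ⟪T (y n), y n⟫ = ‖projCLM K₁ (y n)‖^2 := by
      have e : ⟪T (y n), y n⟫ = ⟪projCLM K₁ (y n), y n⟫ := by
        calc ⟪T (y n), y n⟫ = ⟪projCLM K₂ (projCLM K₁ (y n)), y n⟫ := by rw [hTval]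
          _ = ⟪projCLM K₁ (y n), projCLM K₂ (y n)⟫ := inner_projCLM _ _ _
          _ = ⟪projCLM K₁ (y n), y n⟫ := by rw [hyfix n]
      rw [e, inner_projCLM_self]
      simp [← Complex.ofReal_pow]
    have hTle : ‖T (y n)‖ ≤ ‖projCLM K₁ (y n)‖ := by
      rw [hTval]; exact norm_projCLM_apply_le _ _
    have hexp : ‖T (y n) - y n‖ ^ 2 =
        ‖T (y n)‖ ^ 2 - 2 * RCLike.re ⟪T (y n), y n⟫ + ‖y n‖ ^ 2 :=
      norm_sub_sq (𝕜 := ℂ) _ _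
    have hnn : (0:ℝ) ≤ 1 - 1/(n+1 : ℝ) := by
      have h01 : 1/(n+1:ℝ) ≤ 1 := by
        rw [div_le_one (by positivity)]
        have : (0:ℝ) ≤ n := Nat.cast_nonneg n
        linarith
      linarith
    have e1 : ‖T (y n)‖^2 ≤ ‖projCLM K₁ (y n)‖^2 :=
      pow_le_pow_left₀ (norm_nonneg _) hTle 2
    have e2 : (1 - 1/(n+1:ℝ))^2 ≤ ‖projCLM K₁ (y n)‖^2 :=
      pow_le_pow_left₀ hnn (hq1lb n).le 2
    have e3 : ‖y n‖^2 ≤ 1 := by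
      have := pow_le_pow_left₀ (norm_nonneg _) (hy1 n) 2
      simpa using this
    have e4 : (0:ℝ) ≤ (1/(n+1:ℝ))^2 := sq_nonneg _
    have e5 : (2:ℝ)*(1/(n+1:ℝ)) = 2/(n+1:ℝ) := by ring
    calc ‖T (y n) - y n‖ ^ 2
        = ‖T (y n)‖ ^ 2 - 2 * ‖projCLM K₁ (y n)‖^2 + ‖y n‖ ^ 2 := by rw [hexp, h1]
      _ ≤ ‖projCLM K₁ (y n)‖^2 - 2 * ‖projCLM K₁ (y n)‖^2 + 1 := by linarith [e1, e3]
      _ = 1 - ‖projCLM K₁ (y n)‖^2 := by ring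
      _ ≤ 1 - (1 - 1/(n+1:ℝ))^2 := by linarith [e2]
      _ = 2*(1/(n+1:ℝ)) - (1/(n+1:ℝ))^2 := by ring
      _ ≤ 2/(n+1:ℝ) := by linarith [e4, e5.le, e5.ge]
  have hφcast : Tendsto (fun n => ((φ n : ℝ) + 1)) atTop atTop :=
    tendsto_atTop_add_const_right _ 1 (tendsto_natCast_atTop_atTop.comp hφ.tendsto_atTop)
  have hinv : Tendsto (fun n => 1/((φ n : ℝ)+1)) atTop (nhds 0) :=
    tendsto_const_nhds.div_atTop hφcast
  have hinv2 : Tendsto (fun n => 2/((φ n : ℝ)+1)) atTop (nhds 0) :=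
    tendsto_const_nhds.div_atTop hφcast
  have hd : Tendsto (fun n => T (y (φ n)) - y (φ n)) atTop (nhds 0) := by
    rw [tendsto_zero_iff_norm_tendsto_zero]
    have hsq0 : Tendsto (fun n => Real.sqrt (2/((φ n : ℝ)+1))) atTop (nhds 0) := by
      have := (Real.continuous_sqrt.tendsto (0:ℝ)).comp hinv2
      simpa only [Function.comp_def, Real.sqrt_zero] using this
    apply squeeze_zero (fun n => norm_nonneg _) (fun n => ?_) hsq0
    have h1 : ‖T (y (φ n)) - y (φ n)‖ = Real.sqrt (‖T (y (φ n)) - y (φ n)‖^2) :=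
      (Real.sqrt_sq (norm_nonneg _)).symm
    rw [h1]
    exact Real.sqrt_le_sqrt (hkey (φ n))
  have hlim : Tendsto (fun n => y (φ n)) atTop (nhds z) := by
    have := hz.sub hd
    simpa using this
  have hzK₂ : z ∈ K₂ :=
    hK₂.mem_of_tendsto hlim (Filter.Eventually.of_forall fun n => hymem (φ n))
  have hnormq : Tendsto (fun n => ‖projCLM K₁ (y (φ n))‖) atTop (nhds ‖projCLM K₁ z‖) := by
    have := ((continuous_norm.comp (projCLM K₁).continuous).tendsto z).comp hlim
    simpa [Function.comp_def] using this
  have hto1 : Tendsto (fun n => ‖projCLM K₁ (y (φ n))‖) atTop (nhds 1) := by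
    have hl : Tendsto (fun n => 1 - 1/((φ n : ℝ)+1)) atTop (nhds 1) := by
      have h := (tendsto_const_nhds (x := (1:ℝ)) (f := atTop (α := ℕ))).sub hinv
      simpa using h
    refine tendsto_of_tendsto_of_tendsto_of_le_of_le hl tendsto_const_nhds
      (fun n => (hq1lb (φ n)).le) (fun n => hq1ub (φ n))
  have h1 : ‖projCLM K₁ z‖ = 1 := tendsto_nhds_unique hnormq hto1
  have hz1 : ‖z‖ ≤ 1 := by
    have hnz : Tendsto (fun n => ‖y (φ n)‖) atTop (nhds ‖z‖) := by
      have := (continuous_norm.tendsto z).comp hlim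
      simpa [Function.comp_def] using this
    exact le_of_tendsto hnz (Filter.Eventually.of_forall fun n => hy1 (φ n))
  have hzeq : ‖z‖ = 1 := le_antisymm hz1 (h1 ▸ norm_projCLM_apply_le K₁ z)
  have hperp : RCLike.re ⟪projCLM K₁ z, z - projCLM K₁ z⟫ = 0 := by
    rw [← inner_conj_symm, projCLM_inner_sub' hK₁ z _ (projCLM_apply_mem' hK₁ z)]
    simp
  have hpyth : ‖z‖^2 = ‖projCLM K₁ z‖^2 + ‖z - projCLM K₁ z‖^2 := by
    have hzdec : z = projCLM K₁ z + (z - projCLM K₁ z) := by abel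
    calc ‖z‖^2 = ‖projCLM K₁ z + (z - projCLM K₁ z)‖^2 := by rw [← hzdec]
      _ = ‖projCLM K₁ z‖^2 + 2 * RCLike.re ⟪projCLM K₁ z, z - projCLM K₁ z⟫
          + ‖z - projCLM K₁ z‖^2 := norm_add_sq (𝕜 := ℂ) _ _
      _ = _ := by rw [hperp]; ring
  have hzfix : projCLM K₁ z = z := by
    have : ‖z - projCLM K₁ z‖^2 = 0 := by rw [hzeq, h1] at hpyth; linarith
    have h0 : ‖z - projCLM K₁ z‖ = 0 := by
      have := sq_eq_zero_iff.1 this; exact this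
    rw [norm_eq_zero, sub_eq_zero] at h0
    exact h0.symm
  have hzK₁ : z ∈ K₁ := hzfix ▸ projCLM_apply_mem' hK₁ z
  have : z ∈ K₁ ⊓ K₂ := Submodule.mem_inf.2 ⟨hzK₁, hzK₂⟩
  rw [hdisj, Submodule.mem_bot] at this
  rw [this, norm_zero] at hzeq
  exact zero_ne_one hzeq


end TwoSubspace
set_option maxHeartbeats 1000000 in
open TwoSubspace in
/-- **two-subspace lemma.** Let `N₁`, `N₂` be closed subspaces of a Hilbert space
`H` with orthogonal projections `P₁`, `P₂`. Then `P₁ P₂` is compact if and only if `N₁ + N₂` is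
closed and `P_{N₁+N₂} - (P₁ + P₂)` is compact. -/
theorem product_of_projections_compact_iff
    {H : Type*} [NormedAddCommGroup H] [InnerProductSpace ℂ H] [CompleteSpace H]
    (N₁ N₂ : Submodule ℂ H) (h₁ : IsClosed (N₁ : Set H)) (h₂ : IsClosed (N₂ : Set H)) :
    IsCompactOperator ⇑(projCLM N₁ * projCLM N₂) ↔
      (IsClosed ((N₁ ⊔ N₂ : Submodule ℂ H) : Set H) ∧
        IsCompactOperator ⇑(projCLM (N₁ ⊔ N₂) - (projCLM N₁ + projCLM N₂))) := by
  constructor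
  · intro hPP
    have hPP' : IsCompactOperator ⇑(projCLM N₁ ∘L projCLM N₂) := hPP
    -- the intersection is finite-dimensional
    have hMc : IsClosed ((N₁ ⊓ N₂ : Submodule ℂ H) : Set H) := by
      rw [Submodule.coe_inf]; exact h₁.inter h₂
    haveI hMfd : FiniteDimensional ℂ (N₁ ⊓ N₂ : Submodule ℂ H) := by
      refine finiteDimensional_of_isCompactOperator_fix hPP' hMc fun x hx => ?_
      obtain ⟨hx1, hx2⟩ := Submodule.mem_inf.1 hx
      show projCLM N₁ (projCLM N₂ x) = x
      rw [projCLM_eq_self' h₂ hx2, projCLM_eq_self' h₁ hx1]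
    have hPMc : IsCompactOperator ⇑(projCLM (N₁ ⊓ N₂)) :=
      isCompactOperator_projCLM_of_fd (N₁ ⊓ N₂)
    set M : Submodule ℂ H := N₁ ⊓ N₂ with hMdef
    set N₁' : Submodule ℂ H := N₁ ⊓ Mᗮ with h1def
    set N₂' : Submodule ℂ H := N₂ ⊓ Mᗮ with h2def
    have h₁' : IsClosed ((N₁' : Submodule ℂ H) : Set H) := by
      rw [h1def, Submodule.coe_inf]; exact h₁.inter M.isClosed_orthogonal
    have h₂' : IsClosed ((N₂' : Submodule ℂ H) : Set H) := by
      rw [h2def, Submodule.coe_inf]; exact h₂.inter M.isClosed_orthogonal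
    have hsplit₁ : ∀ x, projCLM N₁ x = projCLM M x + projCLM N₁' x :=
      projCLM_split h₁ hMc inf_le_left
    have hsplit₂ : ∀ x, projCLM N₂ x = projCLM M x + projCLM N₂' x :=
      projCLM_split h₂ hMc inf_le_right
    have hdisj : N₁' ⊓ N₂' = ⊥ := by
      rw [eq_bot_iff]
      intro x hx
      obtain ⟨hx1, hx2⟩ := Submodule.mem_inf.1 hx
      obtain ⟨hx11, hx12⟩ := Submodule.mem_inf.1 hx1
      obtain ⟨hx21, _⟩ := Submodule.mem_inf.1 hx2
      have hxM : x ∈ M := Submodule.mem_inf.2 ⟨hx11, hx21⟩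
      have h0 : (inner ℂ x x : ℂ) = 0 := (Submodule.mem_orthogonal _ _).1 hx12 x hxM
      rw [inner_self_eq_zero] at h0
      simp [h0]
    set B := projCLM N₁' ∘L projCLM N₂' with hBdef
    have hq₁ : ∀ x, projCLM N₁' x = projCLM N₁ x - projCLM M x := fun x => by
      rw [hsplit₁ x]; abel
    have hq₂ : ∀ x, projCLM N₂' x = projCLM N₂ x - projCLM M x := fun x => by
      rw [hsplit₂ x]; abel
    have hBc : IsCompactOperator ⇑B := by
      have h5 : IsCompactOperator
          ((fun x => projCLM N₁ (projCLM N₂ x)) - (fun x => projCLM M (projCLM N₂ x)) -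
            ((fun x => projCLM N₁ (projCLM M x)) - fun x => projCLM M (projCLM M x))) :=
        ((hPP'.sub (hPMc.comp_clm (projCLM N₂)))).sub
          ((hPMc.clm_comp (projCLM N₁)).sub (hPMc.comp_clm (projCLM M)))
      have he : ⇑B = (fun x => projCLM N₁ (projCLM N₂ x)) -
          (fun x => projCLM M (projCLM N₂ x)) -
          ((fun x => projCLM N₁ (projCLM M x)) - fun x => projCLM M (projCLM M x)) := by
        funext x
        simp only [hBdef, comp_apply, Pi.sub_apply]
        rw [hq₂ x, hq₁ (projCLM N₂ x - projCLM M x), map_sub, map_sub]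
        abel
      rw [he]
      exact h5
    have hBlt : ‖B‖ < 1 := opNorm_lt_one_of_compact h₁' h₂' hdisj hBc
    have hBnn : (0:ℝ) ≤ ‖B‖ := norm_nonneg _
    -- inner ℂ product estimate
    have hinner : ∀ a ∈ N₁', ∀ b ∈ N₂', ‖(inner ℂ a b : ℂ)‖ ≤ ‖B‖ * (‖a‖ * ‖b‖) := by
      intro a ha b hb
      have e : (inner ℂ a b : ℂ) = inner ℂ a (B b) := by
        have e1 : B b = projCLM N₁' b := by
          show projCLM N₁' (projCLM N₂' b) = projCLM N₁' b
          rw [projCLM_eq_self' h₂' hb]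
        rw [e1, ← inner_projCLM, projCLM_eq_self' h₁' ha]
      rw [e]
      calc ‖(inner ℂ a (B b) : ℂ)‖ ≤ ‖a‖ * ‖B b‖ := norm_inner_le_norm _ _
        _ ≤ ‖a‖ * (‖B‖ * ‖b‖) := by
            have := B.le_opNorm b
            exact mul_le_mul_of_nonneg_left this (norm_nonneg a)
        _ = ‖B‖ * (‖a‖ * ‖b‖) := by ring
    -- quantitative lower bound
    have hest : ∀ a b m : H, a ∈ N₁' → b ∈ N₂' → m ∈ M →
        (1 - ‖B‖) * (‖a‖^2 + ‖b‖^2 + ‖m‖^2) ≤ ‖a + b + m‖^2 := by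
      intro a b m ha hb hm
      have hma : (inner ℂ m a : ℂ) = 0 :=
        (Submodule.mem_orthogonal _ _).1 (Submodule.mem_inf.1 ha).2 m hm
      have hmb : (inner ℂ m b : ℂ) = 0 :=
        (Submodule.mem_orthogonal _ _).1 (Submodule.mem_inf.1 hb).2 m hm
      have habm : RCLike.re (inner ℂ (a + b) m : ℂ) = 0 := by
        rw [← inner_conj_symm, inner_add_right, hma, hmb]
        simp
      have h6 : ‖a + b + m‖^2 = ‖a + b‖^2 + ‖m‖^2 := by
        rw [norm_add_sq (𝕜 := ℂ) (a+b) m, habm]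
        ring
      have h7 : ‖a + b‖^2 = ‖a‖^2 + 2 * RCLike.re (inner ℂ a b : ℂ) + ‖b‖^2 :=
        norm_add_sq (𝕜 := ℂ) a b
      have h8 : -(‖B‖ * (‖a‖ * ‖b‖)) ≤ RCLike.re (inner ℂ a b : ℂ) := by
        have h9 : |RCLike.re (inner ℂ a b : ℂ)| ≤ ‖(inner ℂ a b : ℂ)‖ := RCLike.abs_re_le_norm _
        have := hinner a ha b hb
        have := abs_le.1 h9
        linarith [this.1]
      nlinarith [mul_nonneg hBnn (sq_nonneg (‖a‖ - ‖b‖)), mul_nonneg hBnn (sq_nonneg ‖m‖),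
        sq_nonneg (‖a‖ - ‖b‖)]
    -- the addition map
    haveI : CompleteSpace N₁' := h₁'.completeSpace_coe
    haveI : CompleteSpace N₂' := h₂'.completeSpace_coe
    haveI : CompleteSpace M := hMc.completeSpace_coe
    set Φ : (↥N₁' × ↥N₂' × ↥M) →L[ℂ] H :=
      (N₁'.subtypeL.comp (ContinuousLinearMap.fst ℂ ↥N₁' (↥N₂' × ↥M))) +
      ((N₂'.subtypeL.comp (ContinuousLinearMap.fst ℂ ↥N₂' ↥M)).comp
        (ContinuousLinearMap.snd ℂ ↥N₁' (↥N₂' × ↥M))) +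
      ((M.subtypeL.comp (ContinuousLinearMap.snd ℂ ↥N₂' ↥M)).comp
        (ContinuousLinearMap.snd ℂ ↥N₁' (↥N₂' × ↥M))) with hΦdef
    have hΦapp : ∀ v : ↥N₁' × ↥N₂' × ↥M, Φ v = (↑v.1 + ↑v.2.1 + ↑v.2.2 : H) := by
      intro v
      simp [hΦdef]
    set δ : ℝ := 1 - ‖B‖ with hδdef
    have hδpos : 0 < δ := by rw [hδdef]; linarith
    set Cr : ℝ := (Real.sqrt δ)⁻¹ with hCrdef
    have hCrpos : 0 < Cr := by
      rw [hCrdef]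
      exact inv_pos.2 (Real.sqrt_pos.2 hδpos)
    have hbound : ∀ v : ↥N₁' × ↥N₂' × ↥M, ‖v‖ ≤ Cr * ‖Φ v‖ := by
      intro v
      have hnv : ‖v‖ = max ‖(↑v.1 : H)‖ (max ‖(↑v.2.1 : H)‖ ‖(↑v.2.2 : H)‖) := by
        rw [Prod.norm_def, Prod.norm_def]
        rfl
      set a : H := ↑v.1
      set b : H := ↑v.2.1
      set m : H := ↑v.2.2
      have hmax : (max ‖a‖ (max ‖b‖ ‖m‖))^2 ≤ ‖a‖^2 + ‖b‖^2 + ‖m‖^2 := by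
        rcases le_total ‖a‖ (max ‖b‖ ‖m‖) with h | h
        · rw [max_eq_right h]
          rcases le_total ‖b‖ ‖m‖ with h' | h'
          · rw [max_eq_right h']
            nlinarith [sq_nonneg ‖a‖, sq_nonneg ‖b‖]
          · rw [max_eq_left h']
            nlinarith [sq_nonneg ‖a‖, sq_nonneg ‖m‖]
        · rw [max_eq_left h]
          nlinarith [sq_nonneg ‖b‖, sq_nonneg ‖m‖]
      have he := hest a b m v.1.2 v.2.1.2 v.2.2.2
      have h2 : δ * ‖v‖^2 ≤ ‖Φ v‖^2 := by
        rw [hΦapp v, hnv]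
        calc δ * (max ‖a‖ (max ‖b‖ ‖m‖))^2 ≤ δ * (‖a‖^2 + ‖b‖^2 + ‖m‖^2) :=
              mul_le_mul_of_nonneg_left hmax hδpos.le
          _ ≤ ‖a + b + m‖^2 := he
      calc ‖v‖ = Real.sqrt (‖v‖^2) := (Real.sqrt_sq (norm_nonneg _)).symm
        _ ≤ Real.sqrt (δ⁻¹ * ‖Φ v‖^2) := by
            apply Real.sqrt_le_sqrt
            have h3 : ‖v‖^2 = δ⁻¹ * (δ * ‖v‖^2) := by
              field_simp
            rw [h3]
            exact mul_le_mul_of_nonneg_left h2 (by positivity)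
        _ = Cr * ‖Φ v‖ := by
            rw [Real.sqrt_mul (by positivity), Real.sqrt_inv, Real.sqrt_sq (norm_nonneg _),
              hCrdef]
    have hanti : AntilipschitzWith Cr.toNNReal ⇑Φ := by
      apply ContinuousLinearMap.antilipschitz_of_bound
      intro x
      rw [Real.coe_toNNReal _ hCrpos.le]
      exact hbound x
    have hclosed_range : IsClosed (Set.range ⇑Φ) :=
      hanti.isClosed_range Φ.uniformContinuous
    have hrange : Set.range ⇑Φ = ((N₁ ⊔ N₂ : Submodule ℂ H) : Set H) := by
      ext w
      constructor
      · rintro ⟨v, rfl⟩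
        rw [hΦapp v]
        refine add_mem (add_mem ?_ ?_) ?_
        · exact Submodule.mem_sup_left (Submodule.mem_inf.1 v.1.2).1
        · exact Submodule.mem_sup_right (Submodule.mem_inf.1 v.2.1.2).1
        · exact Submodule.mem_sup_left (Submodule.mem_inf.1 v.2.2.2).1
      · intro hw
        obtain ⟨y, hy, z, hz, rfl⟩ := Submodule.mem_sup.1 hw
        have hya : projCLM N₁' y ∈ N₁' := projCLM_apply_mem' h₁' y
        have hzb : projCLM N₂' z ∈ N₂' := projCLM_apply_mem' h₂' z
        have hm : projCLM M y + projCLM M z ∈ M :=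
          add_mem (projCLM_apply_mem' hMc y) (projCLM_apply_mem' hMc z)
        refine ⟨⟨⟨projCLM N₁' y, hya⟩, ⟨projCLM N₂' z, hzb⟩,
          ⟨projCLM M y + projCLM M z, hm⟩⟩, ?_⟩
        rw [hΦapp]
        show projCLM N₁' y + projCLM N₂' z + (projCLM M y + projCLM M z) = y + z
        have e1 : y = projCLM M y + projCLM N₁' y := by
          conv_lhs => rw [← projCLM_eq_self' h₁ hy, hsplit₁ y]
        have e2 : z = projCLM M z + projCLM N₂' z := by
          conv_lhs => rw [← projCLM_eq_self' h₂ hz, hsplit₂ z]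
        conv_rhs => rw [e1, e2]
        abel
    have hNc : IsClosed ((N₁ ⊔ N₂ : Submodule ℂ H) : Set H) := hrange ▸ hclosed_range
    refine ⟨hNc, ?_⟩
    -- compactness of the defect operator
    set P := projCLM (N₁ ⊔ N₂) with hPdef
    have hP₁P : ∀ x, projCLM N₁ (P x) = projCLM N₁ x :=
      projCLM_absorb_right hNc le_sup_left h₁
    have hP₂P : ∀ x, projCLM N₂ (P x) = projCLM N₂ x :=
      projCLM_absorb_right hNc le_sup_right h₂
    set W : H →L[ℂ] H :=
      (ContinuousLinearMap.id ℂ H - projCLM N₁) ∘L (projCLM N₂ ∘L projCLM N₁') with hWdef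
    have hWc : IsCompactOperator ⇑W := by
      have h6 : IsCompactOperator ⇑(projCLM N₁' ∘L projCLM N₂) := by
        have h7 : IsCompactOperator
            ((fun x => projCLM N₁ (projCLM N₂ x)) - fun x => projCLM M (projCLM N₂ x)) :=
          hPP'.sub (hPMc.comp_clm (projCLM N₂))
        have he : ⇑(projCLM N₁' ∘L projCLM N₂) =
            (fun x => projCLM N₁ (projCLM N₂ x)) - fun x => projCLM M (projCLM N₂ x) := by
          funext x
          simp only [comp_apply, Pi.sub_apply]
          rw [hq₁]
        rw [he]
        exact h7
      have h8 : projCLM N₂ ∘L projCLM N₁' = adjoint (projCLM N₁' ∘L projCLM N₂) := by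
        rw [adjoint_comp, (isSelfAdjoint_iff'.1 (isSelfAdjoint_projCLM N₂)),
          (isSelfAdjoint_iff'.1 (isSelfAdjoint_projCLM N₁'))]
      have h9 : IsCompactOperator ⇑(projCLM N₂ ∘L projCLM N₁') := by
        rw [h8]
        exact isCompactOperator_adjoint h6
      have h10 := h9.clm_comp (ContinuousLinearMap.id ℂ H - projCLM N₁)
      rw [hWdef, coe_comp']
      exact h10
    -- pointwise decomposition
    have hxdec : ∀ x : H, ∃ a : H, a ∈ N₁' ∧ ‖a‖ ≤ Cr * ‖P x‖ ∧
        (P - (projCLM N₁ + projCLM N₂)) x + (projCLM N₁ ∘L projCLM N₂) (P x) = -(W a) := by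
      intro x
      have hw : P x ∈ ((N₁ ⊔ N₂ : Submodule ℂ H) : Set H) := projCLM_apply_mem' hNc x
      rw [← hrange] at hw
      obtain ⟨v, hv⟩ := hw
      refine ⟨↑v.1, v.1.2, ?_, ?_⟩
      · calc ‖(↑v.1 : H)‖ = ‖v.1‖ := (Submodule.norm_coe v.1)
          _ ≤ ‖v‖ := norm_fst_le v
          _ ≤ Cr * ‖Φ v‖ := hbound v
          _ = Cr * ‖P x‖ := by rw [hv]
      · set a : H := ↑v.1
        set b : H := ↑v.2.1
        set m : H := ↑v.2.2
        have hw' : P x = a + b + m := by rw [← hv, hΦapp]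
        have hP₁a : projCLM N₁ a = a := projCLM_eq_self' h₁ (Submodule.mem_inf.1 v.1.2).1
        have hP₂b : projCLM N₂ b = b := projCLM_eq_self' h₂ (Submodule.mem_inf.1 v.2.1.2).1
        have hP₂m : projCLM N₂ m = m := projCLM_eq_self' h₂ (Submodule.mem_inf.1 v.2.2.2).2
        have hq₁a : projCLM N₁' a = a := projCLM_eq_self' h₁' v.1.2
        have hWa : W a = projCLM N₂ a - projCLM N₁ (projCLM N₂ a) := by
          rw [hWdef]
          simp only [comp_apply, sub_apply, ContinuousLinearMap.id_apply, hq₁a]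
        rw [sub_apply, add_apply, comp_apply, hWa]
        rw [← hP₁P x, ← hP₂P x, hw']
        simp only [map_add, hP₁a, hP₂b, hP₂m]
        abel
    set D' : H →L[ℂ] H :=
      (P - (projCLM N₁ + projCLM N₂)) + ((projCLM N₁ ∘L projCLM N₂) ∘L P) with hD'def
    have hD'c : IsCompactOperator ⇑D' := by
      obtain ⟨K, hKc, hKim⟩ := hWc.image_closedBall_subset_compact Cr
      refine ⟨(fun u => -u) '' K, hKc.image continuous_neg,
        Filter.mem_of_superset (Metric.closedBall_mem_nhds 0 one_pos) ?_⟩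
      intro x hx
      obtain ⟨a, _, hanorm, heq⟩ := hxdec x
      have hxa : a ∈ Metric.closedBall (0:H) Cr := by
        rw [Metric.mem_closedBall, dist_zero_right]
        calc ‖a‖ ≤ Cr * ‖P x‖ := hanorm
          _ ≤ Cr * 1 := by
              apply mul_le_mul_of_nonneg_left _ hCrpos.le
              calc ‖P x‖ ≤ ‖x‖ := norm_projCLM_apply_le _ _
                _ ≤ 1 := by simpa [dist_zero_right] using hx
          _ = Cr := mul_one Cr
      have : D' x = -(W a) := by
        rw [hD'def, add_apply, comp_apply]
        exact heq
      rw [Set.mem_preimage, this]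
      exact ⟨W a, hKim ⟨a, hxa, rfl⟩, rfl⟩
    have hfinal : ⇑(P - (projCLM N₁ + projCLM N₂)) =
        ⇑D' - ⇑((projCLM N₁ ∘L projCLM N₂) ∘L P) := by
      funext x
      simp only [hD'def, Pi.sub_apply, add_apply, sub_apply]
      abel
    rw [hfinal]
    exact hD'c.sub (hPP'.comp_clm P)
  · rintro ⟨hNc, hD⟩
    have he : ⇑(projCLM N₁ * projCLM N₂) = fun x =>
        -(projCLM N₁ ((projCLM (N₁ ⊔ N₂) - (projCLM N₁ + projCLM N₂)) (projCLM N₂ x))) := by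
      funext x
      have e1 : projCLM (N₁ ⊔ N₂) (projCLM N₂ x) = projCLM N₂ x :=
        projCLM_eq_self' hNc (Submodule.mem_sup_right (projCLM_apply_mem' h₂ x))
      have e2 : projCLM N₁ (projCLM N₁ (projCLM N₂ x)) = projCLM N₁ (projCLM N₂ x) :=
        projCLM_eq_self' h₁ (projCLM_apply_mem' h₁ _)
      have e3 : projCLM N₂ (projCLM N₂ x) = projCLM N₂ x :=
        projCLM_eq_self' h₂ (projCLM_apply_mem' h₂ x)
      show projCLM N₁ (projCLM N₂ x) = _
      rw [sub_apply, add_apply, map_sub, map_add, e1, e2, e3]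
      abel
    rw [he]
    exact (((hD.comp_clm (projCLM N₂)).clm_comp (projCLM N₁))).neg
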